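/- The function u_L : ℝ → ℝ given by u_L(x) = arccos(tanh x) + L·sech(x) is strictly decreasing on ℝ when 0 < L ≤ 1, and its range is the open interval (0, π). -/

import Mathlib

open Real Filter Topology

lemma my_tanh_lt_one (x : ℝ) : Real.tanh x < 1 := by
  rw [Real.tanh_eq_sinh_div_cosh, div_lt_one (Real.cosh_pos x)]
  exact Real.sinh_lt_cosh x

lemma my_neg_one_lt_tanh (x : ℝ) : -1 < Real.tanh x := by
  have := my_tanh_lt_one (-x)
  rw [Real.tanh_neg] at this
  linarith

lemma my_continuous_tanh : Continuous Real.tanh := by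
  have : Real.tanh = fun y => Real.sinh y / Real.cosh y :=
    funext fun y => Real.tanh_eq_sinh_div_cosh y
  rw [this]
  exact Real.continuous_sinh.div Real.continuous_cosh fun x => (Real.cosh_pos x).ne'

lemma my_hasDerivAt_tanh (x : ℝ) : HasDerivAt Real.tanh (1 / Real.cosh x ^ 2) x := by
  have hc := Real.cosh_pos x
  have h := (Real.hasDerivAt_sinh x).div (Real.hasDerivAt_cosh x) hc.ne'
  have heq : Real.tanh = fun y => Real.sinh y / Real.cosh y :=
    funext fun y => Real.tanh_eq_sinh_div_cosh y
  rw [heq]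
  refine h.congr_deriv ?_
  have h2 := Real.cosh_sq_sub_sinh_sq x
  congr 1
  nlinarith

lemma my_hasDerivAt (L : ℝ) (x : ℝ) :
    HasDerivAt (fun x : ℝ => arccos (Real.tanh x) + L * (1 / Real.cosh x))
      (-((1 + L * Real.tanh x) / Real.cosh x)) x := by
  have hc := Real.cosh_pos x
  have h1 : Real.tanh x ≠ -1 := (my_neg_one_lt_tanh x).ne'
  have h2 : Real.tanh x ≠ 1 := (my_tanh_lt_one x).ne
  have harc := (Real.hasDerivAt_arccos h1 h2).comp x (my_hasDerivAt_tanh x)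
  have hsq : Real.sqrt (1 - Real.tanh x ^ 2) = 1 / Real.cosh x := by
    have ht : 1 - Real.tanh x ^ 2 = (1 / Real.cosh x) ^ 2 := by
      rw [Real.tanh_eq_sinh_div_cosh]
      have := Real.cosh_sq_sub_sinh_sq x
      field_simp
      linarith
    rw [ht, Real.sqrt_sq (by positivity)]
  have hinv : HasDerivAt (fun y : ℝ => L * (1 / Real.cosh y))
      (L * (-(Real.sinh x) / Real.cosh x ^ 2)) x := by
    have := ((Real.hasDerivAt_cosh x).inv hc.ne').const_mul L
    simpa [one_div] using this
  have := harc.add hinv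
  refine this.congr_deriv ?_
  rw [hsq]
  rw [Real.tanh_eq_sinh_div_cosh]
  field_simp
  ring

lemma my_tendsto_sech : Tendsto (fun x : ℝ => 1 / Real.cosh x) atTop (nhds 0) := by
  have hcosh : Tendsto Real.cosh atTop atTop := by
    apply tendsto_atTop_mono (fun x => ?_) (tendsto_exp_atTop.atTop_div_const two_pos)
    rw [Real.cosh_eq]
    have := Real.exp_pos (-x)
    linarith
  have := hcosh.inv_tendsto_atTop
  simp only [one_div]
  exact this

lemma my_tendsto_tanh_atTop : Tendsto Real.tanh atTop (nhds 1) := by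
  have h : ∀ x : ℝ, Real.tanh x = 1 - Real.exp (-x) * (1 / Real.cosh x) := by
    intro x
    have hc := (Real.cosh_pos x).ne'
    rw [Real.tanh_eq_sinh_div_cosh]
    field_simp
    have := Real.cosh_sub_sinh x
    linarith
  simp only [funext h]
  have : Tendsto (fun x : ℝ => Real.exp (-x) * (1 / Real.cosh x)) atTop (nhds (0 * 0)) :=
    (Real.tendsto_exp_neg_atTop_nhds_zero).mul my_tendsto_sech
  simpa using (tendsto_const_nhds.sub this)

theorem uL_strictAnti_and_range (L : ℝ) (hL0 : 0 < L) (hL1 : L ≤ 1) :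
    StrictAnti (fun x : ℝ => arccos (tanh x) + L * (1 / cosh x)) ∧
      Set.range (fun x : ℝ => arccos (tanh x) + L * (1 / cosh x)) = Set.Ioo 0 π := by
  set f : ℝ → ℝ := fun x => arccos (Real.tanh x) + L * (1 / Real.cosh x) with hf
  have hderiv : ∀ x, deriv f x < 0 := by
    intro x
    rw [(my_hasDerivAt L x).deriv]
    have h1 := my_neg_one_lt_tanh x
    have h2 := my_tanh_lt_one x
    have hc := Real.cosh_pos x
    have hpos : 0 < 1 + L * Real.tanh x := by nlinarith
    have := div_pos hpos hc
    linarith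
  have hanti : StrictAnti f := strictAnti_of_deriv_neg hderiv
  have hcont : Continuous f :=
    (Real.continuous_arccos.comp my_continuous_tanh).add
      (continuous_const.mul (continuous_const.div Real.continuous_cosh
        fun x => (Real.cosh_pos x).ne'))
  have htop : Tendsto f atTop (nhds 0) := by
    have h1 : Tendsto (fun x : ℝ => arccos (Real.tanh x)) atTop (nhds 0) := by
      have := (Real.continuous_arccos.tendsto 1).comp my_tendsto_tanh_atTop
      simpa [Real.arccos_one, Function.comp_def] using this
    have h2 := my_tendsto_sech.const_mul L
    simpa [hf, one_div] using h1.add h2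
  have hbot : Tendsto f atBot (nhds π) := by
    have hneg : Tendsto (fun x : ℝ => -x) atBot atTop := tendsto_neg_atBot_atTop
    have htanh : Tendsto Real.tanh atBot (nhds (-1)) := by
      have := (my_tendsto_tanh_atTop.comp hneg).neg
      simpa [Real.tanh_neg, Function.comp_def] using this
    have h1 : Tendsto (fun x : ℝ => arccos (Real.tanh x)) atBot (nhds π) := by
      have := (Real.continuous_arccos.tendsto (-1)).comp htanh
      simpa [Real.arccos_neg_one, Function.comp_def] using this
    have hsech : Tendsto (fun x : ℝ => 1 / Real.cosh x) atBot (nhds 0) := by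
      have := my_tendsto_sech.comp hneg
      simpa [Real.cosh_neg, Function.comp_def] using this
    have h2 := hsech.const_mul L
    simpa [hf, one_div] using h1.add h2
  refine ⟨hanti, ?_⟩
  ext y
  simp only [Set.mem_range, Set.mem_Ioo]
  constructor
  · rintro ⟨x, rfl⟩
    constructor
    · have harc : 0 < arccos (Real.tanh x) := Real.arccos_pos.2 (my_tanh_lt_one x)
      have : 0 < L * (1 / Real.cosh x) := by positivity
      exact add_pos harc this
    · have hlt : f x < f (x - 1) := hanti (by linarith)
      have hle : f (x - 1) ≤ π := by
        refine ge_of_tendsto hbot ?_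
        filter_upwards [eventually_le_atBot (x - 1)] with z hz
        exact (StrictAnti.le_iff_ge hanti).2 hz
      calc f x < f (x - 1) := hlt
        _ ≤ π := hle
  · rintro ⟨hy0, hyπ⟩
    have hb : ∀ᶠ x in atTop, f x < y := by
      have := htop.eventually (eventually_lt_nhds hy0)
      simpa using this
    have ha : ∀ᶠ x in atBot, y < f x := by
      have := hbot.eventually (eventually_gt_nhds hyπ)
      simpa using this
    obtain ⟨b, hb⟩ := hb.exists
    obtain ⟨a, ha⟩ := ha.exists
    obtain ⟨x, hx⟩ := intermediate_value_univ₂ (f := f) (g := fun _ => y) hcont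
      continuous_const (a := b) (b := a) hb.le ha.le
    exact ⟨x, hx⟩
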